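/- arXiv:2112.11379 — 3 statements merged into one kernel-verified Lean document; each statement's English description precedes it below -/
import Mathlib

section
/- Let n, r be integers with 0 \leq n \leq r. Then \int_0^{\infty} t^r H_n(t) e^{-t^2} dt = \frac{r!}{2 (r-n)!} \Gamma\left(\frac{r-n+1}{2}\right). -/
open MeasureTheory

/-- The physicists' Hermite polynomials, via the recurrence
`H_{n+1}(x) = 2x H_n(x) - H_n'(x)`, equivalent to
`H_n(x) = (-1)^n e^{x^2} (d/dx)^n e^{-x^2}`. -/
noncomputable def hermiteH : ℕ → Polynomial ℤ
  | 0 => 1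
  | n + 1 => 2 * Polynomial.X * hermiteH n - Polynomial.derivative (hermiteH n)

/-- Evaluation of the `n`-th Hermite polynomial at a real number. -/
noncomputable def Hr (n : ℕ) (x : ℝ) : ℝ := Polynomial.aeval x (hermiteH n)

noncomputable def PH (n : ℕ) : Polynomial ℝ := (hermiteH n).map (Int.castRingHom ℝ)

lemma Hr_eq (n : ℕ) (x : ℝ) : Hr n x = (PH n).eval x := by
  rw [Hr, PH, Polynomial.eval_map, Polynomial.aeval_def]
  norm_num

lemma PH_zero : PH 0 = 1 := by simp [PH, hermiteH]

lemma PH_succ (n : ℕ) :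
    PH (n + 1) = 2 * Polynomial.X * PH n - Polynomial.derivative (PH n) := by
  simp [PH, hermiteH, Polynomial.derivative_map]

open Real Set Filter in
lemma integrableOn_poly_gaussian (p : Polynomial ℝ) :
    IntegrableOn (fun t : ℝ => p.eval t * Real.exp (-t ^ 2)) (Set.Ioi 0) := by
  induction p using Polynomial.induction_on' with
  | monomial n c =>
      have h := (integrableOn_rpow_mul_exp_neg_mul_sq (b := 1) one_pos
        (s := n) (neg_one_lt_zero.trans_le (Nat.cast_nonneg n))).const_mul c
      apply IntegrableOn.congr_fun h _ measurableSet_Ioi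
      intro x hx
      simp only [Polynomial.eval_monomial]
      rw [Real.rpow_natCast]
      ring_nf
  | add p q hp hq =>
      simpa [add_mul] using hp.fun_add hq

open Real Set Filter in
lemma tendsto_poly_gaussian (p : Polynomial ℝ) :
    Tendsto (fun t : ℝ => p.eval t * Real.exp (-t ^ 2)) atTop (nhds 0) := by
  apply squeeze_zero_norm' (a := fun t => |p.eval t / Real.exp t|)
  · filter_upwards [eventually_ge_atTop (1 : ℝ)] with t ht
    rw [Real.norm_eq_abs, abs_mul, abs_of_nonneg (Real.exp_pos _).le,
      abs_div, abs_of_nonneg (Real.exp_pos _).le, div_eq_mul_inv, ← Real.exp_neg]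
    have h1 : t ≤ t ^ 2 := by nlinarith
    exact mul_le_mul_of_nonneg_left (Real.exp_le_exp.2 (by linarith)) (abs_nonneg _)
  · simpa using (Polynomial.tendsto_div_exp_atTop p).abs

open Real Set Filter in
lemma ftc_poly_gaussian (p : Polynomial ℝ) :
    (∫ t in Set.Ioi (0 : ℝ),
        ((Polynomial.derivative p).eval t - 2 * t * p.eval t) * Real.exp (-t ^ 2))
      = - p.eval 0 := by
  have key := integral_Ioi_of_hasDerivAt_of_tendsto'
    (f := fun t : ℝ => p.eval t * Real.exp (-t ^ 2))
    (f' := fun t : ℝ => ((Polynomial.derivative p).eval t - 2 * t * p.eval t)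
      * Real.exp (-t ^ 2)) (a := 0) (m := 0)
    (fun x _ => ?_) ?_ (tendsto_poly_gaussian p)
  · simpa using key
  · have h1 : HasDerivAt (fun t : ℝ => p.eval t) ((Polynomial.derivative p).eval x) x :=
      p.hasDerivAt x
    have h2 : HasDerivAt (fun t : ℝ => Real.exp (-t ^ 2))
        (Real.exp (-x ^ 2) * (-(2 * x))) x := by
      have : HasDerivAt (fun t : ℝ => -t ^ 2) (-(2 * x)) x := by
        simpa using ((hasDerivAt_pow 2 x).fun_neg)
      exact (Real.hasDerivAt_exp _).comp x this
    refine (h1.fun_mul h2).congr_deriv ?_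
    ring
  · have hq : (fun t : ℝ => ((Polynomial.derivative p).eval t - 2 * t * p.eval t)
        * Real.exp (-t ^ 2))
        = fun t : ℝ => (Polynomial.derivative p - 2 * Polynomial.X * p).eval t
          * Real.exp (-t ^ 2) := by
      funext t; simp
    rw [hq]
    exact integrableOn_poly_gaussian _

open Real Set Filter in
lemma key_step (n m : ℕ) :
    (∫ t in Set.Ioi (0 : ℝ), t ^ (m + 1) * Hr (n + 1) t * Real.exp (-t ^ 2))
      = (m + 1 : ℝ) * ∫ t in Set.Ioi (0 : ℝ), t ^ m * Hr n t * Real.exp (-t ^ 2) := by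
  have key := ftc_poly_gaussian (Polynomial.X ^ (m + 1) * PH n)
  have hpt : ∀ t : ℝ,
      (Polynomial.derivative (Polynomial.X ^ (m + 1) * PH n)).eval t
        - 2 * t * (Polynomial.X ^ (m + 1) * PH n).eval t
      = (m + 1 : ℝ) * (t ^ m * (PH n).eval t)
        - t ^ (m + 1) * (PH (n + 1)).eval t := by
    intro t
    rw [Polynomial.derivative_mul, Polynomial.derivative_X_pow, PH_succ]
    simp only [Polynomial.eval_add, Polynomial.eval_mul, Polynomial.eval_sub,
      Polynomial.eval_pow, Polynomial.eval_X, Polynomial.eval_natCast,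
      Polynomial.eval_smul, smul_eq_mul, Polynomial.eval_ofNat, nsmul_eq_mul,
      Polynomial.eval_C]
    push_cast
    ring
  have key' : (∫ t in Set.Ioi (0 : ℝ),
      ((m + 1 : ℝ) * (t ^ m * (PH n).eval t) * Real.exp (-t ^ 2)
        - t ^ (m + 1) * (PH (n + 1)).eval t * Real.exp (-t ^ 2))) = 0 := by
    have e0 : - (Polynomial.X ^ (m + 1) * PH n).eval 0 = (0 : ℝ) := by
      simp [zero_pow (Nat.succ_ne_zero m)]
    conv_rhs => rw [← e0, ← key]
    apply setIntegral_congr_fun (μ := volume) measurableSet_Ioi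
    intro t _
    simp only []
    rw [← sub_mul, ← hpt t]
  have hint1 : IntegrableOn
      (fun t : ℝ => (m + 1 : ℝ) * (t ^ m * (PH n).eval t) * Real.exp (-t ^ 2))
      (Set.Ioi 0) := by
    have h := integrableOn_poly_gaussian ((Polynomial.C ((m : ℝ) + 1)) *
      (Polynomial.X ^ m * PH n))
    apply IntegrableOn.congr_fun h _ measurableSet_Ioi
    intro x _; simp
  have hint2 : IntegrableOn
      (fun t : ℝ => t ^ (m + 1) * (PH (n + 1)).eval t * Real.exp (-t ^ 2))
      (Set.Ioi 0) := by
    have h := integrableOn_poly_gaussian (Polynomial.X ^ (m + 1) * PH (n + 1))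
    apply IntegrableOn.congr_fun h _ measurableSet_Ioi
    intro x _; simp
  rw [integral_sub hint1 hint2] at key'
  simp only [Hr_eq]
  have h2 : (∫ t in Set.Ioi (0 : ℝ),
      (m + 1 : ℝ) * (t ^ m * (PH n).eval t) * Real.exp (-t ^ 2))
      = (m + 1 : ℝ) * ∫ t in Set.Ioi (0 : ℝ), t ^ m * (PH n).eval t * Real.exp (-t ^ 2) := by
    rw [← integral_const_mul]
    congr 1; funext t; ring
  linarith [sub_eq_zero.mp key']

/-- For `0 ≤ n ≤ r`,
`∫_0^∞ t^r H_n(t) e^{-t^2} dt = r!/(2 (r-n)!) Γ((r-n+1)/2)`. -/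
theorem integral_pow_mul_hermite_mul_gaussian (n r : ℕ) (h : n ≤ r) :
    (∫ t in Set.Ioi (0 : ℝ), t ^ r * Hr n t * Real.exp (-t ^ 2))
      = (r.factorial : ℝ) / (2 * ((r - n).factorial : ℝ)) *
          Real.Gamma (((r : ℝ) - (n : ℝ) + 1) / 2) := by
  induction n generalizing r with
  | zero =>
      have hH : ∀ t : ℝ, Hr 0 t = 1 := by intro t; simp [Hr_eq, PH_zero]
      simp only [hH, mul_one, Nat.sub_zero, Nat.cast_zero, sub_zero]
      have h1 := integral_rpow_mul_exp_neg_rpow (p := 2) (q := r) two_pos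
        (neg_one_lt_zero.trans_le (Nat.cast_nonneg r))
      have heq : (∫ t in Set.Ioi (0 : ℝ), t ^ r * Real.exp (-t ^ 2))
          = ∫ t in Set.Ioi (0 : ℝ), t ^ (r : ℝ) * Real.exp (-t ^ (2 : ℝ)) := by
        apply setIntegral_congr_fun measurableSet_Ioi
        intro x _
        simp only [Real.rpow_natCast, Real.rpow_two]
      rw [heq, h1]
      have hne : (r.factorial : ℝ) ≠ 0 := Nat.cast_ne_zero.2 r.factorial_pos.ne'
      field_simp
  | succ n ih =>
      obtain ⟨m, rfl⟩ : ∃ m, r = m + 1 := ⟨r - 1, by omega⟩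
      have hnm : n ≤ m := by omega
      rw [key_step n m, ih m hnm]
      have hfac : ((m + 1).factorial : ℝ) = (m + 1 : ℝ) * m.factorial := by
        rw [Nat.factorial_succ]; push_cast; ring
      have hsub : (m + 1) - (n + 1) = m - n := by omega
      rw [hsub, hfac]
      have hcast : ((m : ℝ) + 1 - ((n : ℝ) + 1) + 1) = (m : ℝ) - n + 1 := by ring
      push_cast
      rw [hcast]
      have hne : ((m - n).factorial : ℝ) ≠ 0 := Nat.cast_ne_zero.2 (m - n).factorial_pos.ne'
      field_simp
end

section
/- Fix a > 0 and \kappa \geq 2 an integer. The functions I_1(y) = e^{-2 a \beta y} and I_2(y) = e^{-2 a \beta y} \Gamma(2\kappa + 1, -4 a \beta y) are linearly independent solutions on (0,\infty) of the second order ODE y I''(y) - 2\kappa I'(y) - (4\kappa a \beta + 4 a^2 \beta^2 y) I(y) = 0, for any real \beta \neq 0. -/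
/-- The (polynomially continued) upper incomplete Gamma function
`Γ(n+1, x) = n! e^{-x} ∑_{m=0}^n x^m/m!`, valid for all real `x`. -/
noncomputable def incGamma (n : ℕ) (x : ℝ) : ℝ :=
  (n.factorial : ℝ) * Real.exp (-x) * ∑ m ∈ Finset.range (n + 1), x ^ m / (m.factorial : ℝ)

lemma sumExp_hasDerivAt (n : ℕ) (x : ℝ) :
    HasDerivAt (fun x : ℝ => Real.exp (-x) * ∑ m ∈ Finset.range (n+1), x ^ m / (m.factorial : ℝ))
      (-(Real.exp (-x) * x ^ n / (n.factorial : ℝ))) x := by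
  induction n with
  | zero =>
    simp only [zero_add, Finset.sum_range_one, pow_zero, Nat.factorial_zero, Nat.cast_one, div_one, mul_one]
    exact ((Real.hasDerivAt_exp (-x)).comp x (hasDerivAt_id x).neg).congr_deriv (by ring)
  | succ n ih =>
    have hexp : HasDerivAt (fun x : ℝ => Real.exp (-x)) (-Real.exp (-x)) x := by
      exact ((Real.hasDerivAt_exp (-x)).comp x (hasDerivAt_id x).neg).congr_deriv (by ring)
    have hpow : HasDerivAt (fun x : ℝ => x ^ (n+1) / ((n+1).factorial : ℝ))
        ((n+1) * x ^ n / ((n+1).factorial : ℝ)) x := by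
      simpa using (hasDerivAt_pow (n+1) x).div_const ((n+1).factorial : ℝ)
    have hterm := hexp.mul hpow
    have hsum := ih.add hterm
    have hfun : (fun x : ℝ => Real.exp (-x) * ∑ m ∈ Finset.range (n+1+1), x ^ m / (m.factorial : ℝ))
        = fun x : ℝ => (Real.exp (-x) * ∑ m ∈ Finset.range (n+1), x ^ m / (m.factorial : ℝ))
          + Real.exp (-x) * (x ^ (n+1) / ((n+1).factorial : ℝ)) := by
      funext x
      rw [Finset.sum_range_succ]
      ring
    rw [hfun]
    refine hsum.congr_deriv ?_
    have h1 : ((n+1).factorial : ℝ) = (n+1) * (n.factorial : ℝ) := by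
      push_cast [Nat.factorial_succ]; ring
    have h2 : (n.factorial : ℝ) ≠ 0 := Nat.cast_ne_zero.2 n.factorial_ne_zero
    have h3 : ((n+1).factorial : ℝ) ≠ 0 := Nat.cast_ne_zero.2 (n+1).factorial_ne_zero
    rw [h1]
    field_simp
    ring

lemma incGamma_hasDerivAt (n : ℕ) (x : ℝ) :
    HasDerivAt (fun x => incGamma n x) (-(x ^ n * Real.exp (-x))) x := by
  have h := (sumExp_hasDerivAt n x).const_mul (n.factorial : ℝ)
  have h2 : (n.factorial : ℝ) ≠ 0 := Nat.cast_ne_zero.2 n.factorial_ne_zero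
  unfold incGamma
  convert h using 1
  · rfl
  · rfl
  · funext x; ring
  · field_simp

/-- For `a > 0`, integer `κ ≥ 2` and real `β ≠ 0`, the functions
`I₁(y) = e^{-2aβy}` and `I₂(y) = e^{-2aβy} Γ(2κ+1, -4aβy)` are linearly
independent solutions on `(0,∞)` of
`y I'' - 2κ I' - (4κaβ + 4a²β²y) I = 0`. -/
theorem ode_solutions_linear_independent (a : ℝ) (ha : 0 < a) (κ : ℕ) (hκ : 2 ≤ κ)
    (β : ℝ) (hβ : β ≠ 0) :
    (∀ y ∈ Set.Ioi (0 : ℝ),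
      y * deriv (deriv (fun t : ℝ => Real.exp (-2 * a * β * t))) y
        - 2 * κ * deriv (fun t : ℝ => Real.exp (-2 * a * β * t)) y
        - (4 * κ * a * β + 4 * a ^ 2 * β ^ 2 * y) * Real.exp (-2 * a * β * y) = 0) ∧
    (∀ y ∈ Set.Ioi (0 : ℝ),
      y * deriv (deriv (fun t : ℝ => Real.exp (-2 * a * β * t) * incGamma (2 * κ) (-4 * a * β * t))) y
        - 2 * κ * deriv (fun t : ℝ => Real.exp (-2 * a * β * t) * incGamma (2 * κ) (-4 * a * β * t)) y
        - (4 * κ * a * β + 4 * a ^ 2 * β ^ 2 * y) *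
            (Real.exp (-2 * a * β * y) * incGamma (2 * κ) (-4 * a * β * y)) = 0) ∧
    (∀ c₁ c₂ : ℝ,
      (∀ y ∈ Set.Ioi (0 : ℝ),
        c₁ * Real.exp (-2 * a * β * y)
          + c₂ * (Real.exp (-2 * a * β * y) * incGamma (2 * κ) (-4 * a * β * y)) = 0) →
      c₁ = 0 ∧ c₂ = 0) := by
  -- basic derivative facts
  have hde : ∀ t : ℝ, HasDerivAt (fun t : ℝ => Real.exp (-2*a*β*t)) (-2*a*β*Real.exp (-2*a*β*t)) t := by
    intro t
    have h := (Real.hasDerivAt_exp (-2*a*β*t)).comp t ((hasDerivAt_id t).const_mul (-2*a*β))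
    exact h.congr_deriv (by ring)
  have hG : ∀ t : ℝ, HasDerivAt (fun t : ℝ => incGamma (2*κ) (-4*a*β*t))
      (-4*a*β * (-((-4*a*β*t)^(2*κ) * Real.exp (-(-4*a*β*t))))) t := by
    intro t
    have h := (incGamma_hasDerivAt (2*κ) (-4*a*β*t)).comp t ((hasDerivAt_id t).const_mul (-4*a*β))
    exact h.congr_deriv (by ring)
  have hpow : ∀ t : ℝ, HasDerivAt (fun t : ℝ => (-4*a*β*t)^(2*κ))
      (-4*a*β * ((2*κ) * (-4*a*β*t)^(2*κ-1))) t := by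
    intro t
    have h := (hasDerivAt_pow (2*κ) (-4*a*β*t)).comp t ((hasDerivAt_id t).const_mul (-4*a*β))
    exact h.congr_deriv (by push_cast; ring)
  have hE2 : ∀ t : ℝ, HasDerivAt (fun t : ℝ => Real.exp (-(-4*a*β*t))) (4*a*β*Real.exp (-(-4*a*β*t))) t := by
    intro t
    have h := (Real.hasDerivAt_exp (-(-4*a*β*t))).comp t (((hasDerivAt_id t).const_mul (-4*a*β)).neg)
    exact h.congr_deriv (by ring)
  -- first derivative of I₁
  have hd1 : deriv (fun t : ℝ => Real.exp (-2*a*β*t)) = fun t : ℝ => -2*a*β*Real.exp (-2*a*β*t) :=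
    funext fun t => (hde t).deriv
  -- first derivative of I₂
  have hd2 : deriv (fun t : ℝ => Real.exp (-2*a*β*t) * incGamma (2*κ) (-4*a*β*t))
      = fun t : ℝ => -2*a*β*Real.exp (-2*a*β*t) * incGamma (2*κ) (-4*a*β*t)
          + Real.exp (-2*a*β*t) * (-4*a*β * (-((-4*a*β*t)^(2*κ) * Real.exp (-(-4*a*β*t))))) :=
    funext fun t => ((hde t).mul (hG t)).deriv
  refine ⟨?_, ?_, ?_⟩
  · intro y _
    have h2 : HasDerivAt (fun t : ℝ => -2*a*β*Real.exp (-2*a*β*t))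
        (-2*a*β*(-2*a*β*Real.exp (-2*a*β*y))) y := (hde y).const_mul (-2*a*β)
    rw [hd1, h2.deriv]
    ring
  · intro y _
    -- second derivative of I₂
    have hA : HasDerivAt (fun t : ℝ => -2*a*β*Real.exp (-2*a*β*t) * incGamma (2*κ) (-4*a*β*t))
        ((-2*a*β*(-2*a*β*Real.exp (-2*a*β*y))) * incGamma (2*κ) (-4*a*β*y)
          + (-2*a*β*Real.exp (-2*a*β*y)) * (-4*a*β * (-((-4*a*β*y)^(2*κ) * Real.exp (-(-4*a*β*y)))))) y :=
      ((hde y).const_mul (-2*a*β)).mul (hG y)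
    have hBin : HasDerivAt (fun t : ℝ => -4*a*β * (-((-4*a*β*t)^(2*κ) * Real.exp (-(-4*a*β*t)))))
        (-4*a*β * (-((-4*a*β * ((2*κ) * (-4*a*β*y)^(2*κ-1))) * Real.exp (-(-4*a*β*y))
          + (-4*a*β*y)^(2*κ) * (4*a*β*Real.exp (-(-4*a*β*y)))))) y :=
      (((hpow y).mul (hE2 y)).neg).const_mul (-4*a*β)
    have hB := (hde y).fun_mul hBin
    have h2 := hA.fun_add hB
    rw [hd2, h2.deriv]
    have hpy : (-4*a*β*y)^(2*κ) = (-4*a*β*y) * (-4*a*β*y)^(2*κ-1) := by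
      have h : 2*κ = (2*κ-1)+1 := by omega
      rw [h, pow_succ]; rw [← h]; ring
    beta_reduce
    rw [hpy]
    ring
  · intro c₁ c₂ H
    have hφ : ∀ y ∈ Set.Ioi (0:ℝ), c₁ + c₂ * incGamma (2*κ) (-4*a*β*y) = 0 := by
      intro y hy
      have h := H y hy
      have he : Real.exp (-2*a*β*y) ≠ 0 := Real.exp_ne_zero _
      have : (c₁ + c₂ * incGamma (2*κ) (-4*a*β*y)) * Real.exp (-2*a*β*y) = 0 := by
        rw [← h]; ring
      exact (mul_eq_zero.1 this).resolve_right he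
    have hmem : Set.Ioi (0:ℝ) ∈ nhds (1:ℝ) := Ioi_mem_nhds one_pos
    have heq : (fun y : ℝ => c₁ + c₂ * incGamma (2*κ) (-4*a*β*y)) =ᶠ[nhds (1:ℝ)] (fun _ => (0:ℝ)) :=
      Filter.eventuallyEq_of_mem hmem hφ
    have hdφ : HasDerivAt (fun y : ℝ => c₁ + c₂ * incGamma (2*κ) (-4*a*β*y))
        (c₂ * (-4*a*β * (-((-4*a*β*1)^(2*κ) * Real.exp (-(-4*a*β*1)))))) 1 := by
      simpa using (hasDerivAt_const (1:ℝ) c₁).fun_add ((hG 1).const_mul c₂)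
    have hd0 : c₂ * (-4*a*β * (-((-4*a*β*1)^(2*κ) * Real.exp (-(-4*a*β*1))))) = 0 := by
      rw [← hdφ.deriv, heq.deriv_eq]
      simp
    have hne : (-4*a*β * (-((-4*a*β*1)^(2*κ) * Real.exp (-(-4*a*β*1))))) ≠ 0 := by
      have h1 : (-4*a*β : ℝ) ≠ 0 := by
        simp only [ne_eq, mul_eq_zero]
        push_neg
        exact ⟨⟨by norm_num, ne_of_gt ha⟩, hβ⟩
      have h2 : (-4*a*β*1 : ℝ) ≠ 0 := by rwa [mul_one]
      have h3 : ((-4*a*β*1:ℝ))^(2*κ) ≠ 0 := pow_ne_zero _ h2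
      have h4 : Real.exp (-(-4*a*β*1)) ≠ 0 := Real.exp_ne_zero _
      exact mul_ne_zero h1 (neg_ne_zero.2 (mul_ne_zero h3 h4))
    have hc2 : c₂ = 0 := by
      rcases mul_eq_zero.1 hd0 with h | h
      · exact h
      · exact absurd h hne
    have hc1 : c₁ = 0 := by
      have := hφ 1 (by norm_num)
      rw [hc2] at this
      simpa using this
    exact ⟨hc1, hc2⟩
end

section
/- Let \kappa \geq 2 be an integer and a a real number. Acting with the Maass raising operator R_{\kappa - 3/2} = 2i \partial/\partial\tau + (\kappa - 3/2) v^{-1} on the function \tau = u + iv \mapsto v^{-(\kappa-2)/2} H_{\kappa - 2}(a\sqrt{v}) e^{i a^2 \tau / 2} yields -\frac{1}{4} v^{-\kappa/2} H_{\kappa}(a\sqrt{v}) e^{i a^2 \tau/2}. -/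
/-- The function `τ = u + iv ↦ v^{-(κ-2)/2} H_{κ-2}(a√v) e^{i a² τ/2}`. -/
noncomputable def fRaise (κ : ℕ) (a u v : ℝ) : ℂ :=
  ((v ^ (-((κ : ℝ) - 2) / 2) * Hr (κ - 2) (a * Real.sqrt v) : ℝ) : ℂ) *
    Complex.exp (Complex.I * (a : ℂ) ^ 2 * ((u : ℂ) + (v : ℂ) * Complex.I) / 2)

lemma hermiteH_succ (n : ℕ) : hermiteH (n+1) = 2*Polynomial.X*hermiteH n
    - Polynomial.derivative (hermiteH n) := rfl

lemma hermiteH_deriv (n : ℕ) :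
    Polynomial.derivative (hermiteH (n+1)) = Polynomial.C (2*((n:ℤ)+1)) * hermiteH n := by
  induction n with
  | zero => simp [hermiteH]
  | succ n ih =>
    have hd : Polynomial.derivative (hermiteH n)
        = 2*Polynomial.X*hermiteH n - hermiteH (n+1) := by
      rw [hermiteH_succ]; ring
    simp only [hermiteH_succ (n+1), Polynomial.derivative_sub, Polynomial.derivative_mul, ih,
      Polynomial.derivative_C, Polynomial.derivative_X, hd]
    push_cast [map_mul, map_add, map_ofNat, Polynomial.derivative_ofNat, Polynomial.C_1]
    ring

lemma hermiteH_add_two (n : ℕ) :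
    hermiteH (n+2) = (4*Polynomial.X^2 - Polynomial.C (2*(n:ℤ)+2)) * hermiteH n
      - 2*Polynomial.X * Polynomial.derivative (hermiteH n) := by
  rw [show (n+2) = (n+1)+1 from rfl, hermiteH_succ (n+1), hermiteH_deriv, hermiteH_succ n]
  push_cast [map_mul, map_add, map_ofNat, Polynomial.C_1]
  ring

lemma Hr_add_two (n : ℕ) (x : ℝ) :
    Hr (n+2) x = (4*x^2 - (2*n+2)) * Hr n x
      - 2*x*(Polynomial.aeval x (Polynomial.derivative (hermiteH n))) := by
  unfold Hr
  rw [hermiteH_add_two]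
  simp [map_sub, map_mul, map_add, map_pow, map_ofNat]

lemma key_real (n : ℕ) (a v : ℝ) (hv : 0 < v) :
    ((-(n:ℝ)/2) * v^(-(n:ℝ)/2-1) * Hr n (a*Real.sqrt v)
      + v^(-(n:ℝ)/2) * ((Polynomial.aeval (a*Real.sqrt v)
          (Polynomial.derivative (hermiteH n))) * (a*(1/(2*Real.sqrt v)))))
      - a^2*(v^(-(n:ℝ)/2) * Hr n (a*Real.sqrt v))
      + ((2+(n:ℝ))-3/2)/v*(v^(-(n:ℝ)/2) * Hr n (a*Real.sqrt v))
    = -(1/4) * (v^(-(2+(n:ℝ))/2) * Hr (n+2) (a*Real.sqrt v)) := by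
  have hs0 : (0:ℝ) < Real.sqrt v := Real.sqrt_pos.2 hv
  have hs2 : Real.sqrt v ^ 2 = v := Real.sq_sqrt hv.le
  rw [Hr_add_two]
  have hv1 : v ^ (-(n:ℝ)/2) = v ^ (-(n:ℝ)/2-1) * v := by
    rw [← Real.rpow_add_one hv.ne']; norm_num
  have hv2 : v ^ (-(2+(n:ℝ))/2) = v ^ (-(n:ℝ)/2-1) := by
    congr 1; ring
  rw [hv1, hv2]
  set s := Real.sqrt v with hs
  set c := v ^ (-(n:ℝ)/2-1) with hc
  rw [← hs2]
  field_simp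
  ring

/-- Applying the Maass raising operator
`R_{κ-3/2} = 2i ∂/∂τ + (κ - 3/2) v⁻¹`, with `∂/∂τ = ½(∂/∂u - i ∂/∂v)`, to
`v^{-(κ-2)/2} H_{κ-2}(a√v) e^{i a² τ/2}` yields
`-(1/4) v^{-κ/2} H_κ(a√v) e^{i a² τ/2}`. -/
theorem raising_hermite (κ : ℕ) (hκ : 2 ≤ κ) (a u v : ℝ) (hv : 0 < v) :
    2 * Complex.I * ((1 / 2) *
        (deriv (fun u' : ℝ => fRaise κ a u' v) u
          - Complex.I * deriv (fun v' : ℝ => fRaise κ a u v') v))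
      + ((κ : ℂ) - 3 / 2) / (v : ℂ) * fRaise κ a u v
    = -(1 / 4) * ((v ^ (-(κ : ℝ) / 2) * Hr κ (a * Real.sqrt v) : ℝ) : ℂ) *
        Complex.exp (Complex.I * (a : ℂ) ^ 2 * ((u : ℂ) + (v : ℂ) * Complex.I) / 2) := by
  obtain ⟨n, rfl⟩ := Nat.exists_eq_add_of_le hκ
  have hfr : ∀ u' v' : ℝ, fRaise (2+n) a u' v'
      = ((v' ^ (-(n:ℝ)/2) * Hr n (a * Real.sqrt v') : ℝ) : ℂ) *
        Complex.exp (Complex.I * (a:ℂ)^2 * ((u':ℂ) + (v':ℂ)*Complex.I) / 2) := by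
    intro u' v'
    have he : -(((2+n:ℕ):ℝ) - 2)/2 = -(n:ℝ)/2 := by push_cast; ring
    unfold fRaise
    rw [he, Nat.add_sub_cancel_left]
  -- derivative in u
  have hu : deriv (fun u' : ℝ => fRaise (2+n) a u' v) u
      = ((v ^ (-(n:ℝ)/2) * Hr n (a * Real.sqrt v) : ℝ) : ℂ) *
        (Complex.I * (a:ℂ)^2 / 2 *
          Complex.exp (Complex.I * (a:ℂ)^2 * ((u:ℂ) + (v:ℂ)*Complex.I) / 2)) := by
    have h1 : HasDerivAt (fun u' : ℝ => ((u':ℂ) + (v:ℂ)*Complex.I)) 1 u := by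
      simpa using ((hasDerivAt_id u).ofReal_comp).add_const ((v:ℂ)*Complex.I)
    have h2 := (((h1.const_mul (Complex.I * (a:ℂ)^2)).div_const 2).cexp).const_mul
      (((v ^ (-(n:ℝ)/2) * Hr n (a * Real.sqrt v) : ℝ) : ℂ))
    have h3 : (fun u' : ℝ => fRaise (2+n) a u' v)
        = fun u' : ℝ => ((v ^ (-(n:ℝ)/2) * Hr n (a * Real.sqrt v) : ℝ) : ℂ) *
          Complex.exp (Complex.I * (a:ℂ)^2 * ((u':ℂ) + (v:ℂ)*Complex.I) / 2) := by
      funext u'; exact hfr u' v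
    rw [h3, h2.deriv]
    ring
  -- derivative in v
  have hs0 : (0:ℝ) < Real.sqrt v := Real.sqrt_pos.2 hv
  have hg : HasDerivAt (fun v' : ℝ => v' ^ (-(n:ℝ)/2) * Hr n (a * Real.sqrt v'))
      ((-(n:ℝ)/2) * v^(-(n:ℝ)/2-1) * Hr n (a * Real.sqrt v)
        + v^(-(n:ℝ)/2) * ((Polynomial.aeval (a * Real.sqrt v)
            (Polynomial.derivative (hermiteH n))) * (a*(1/(2*Real.sqrt v))))) v := by
    have h1 : HasDerivAt (fun v' : ℝ => v' ^ (-(n:ℝ)/2))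
        ((-(n:ℝ)/2) * v ^ ((-(n:ℝ)/2) - 1)) v :=
      Real.hasDerivAt_rpow_const (Or.inl hv.ne')
    have h3 : HasDerivAt (fun v' : ℝ => a * Real.sqrt v') (a * (1/(2*Real.sqrt v))) v :=
      (Real.hasDerivAt_sqrt hv.ne').const_mul a
    have h4 : HasDerivAt (fun y : ℝ => Hr n y)
        (Polynomial.aeval (a * Real.sqrt v) (Polynomial.derivative (hermiteH n)))
        (a * Real.sqrt v) := Polynomial.hasDerivAt_aeval (hermiteH n) (a * Real.sqrt v)
    exact h1.mul (HasDerivAt.comp v (h₂ := fun y : ℝ => Hr n y) h4 h3)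
  have hvv : deriv (fun v' : ℝ => fRaise (2+n) a u v') v
      = (((-(n:ℝ)/2) * v^(-(n:ℝ)/2-1) * Hr n (a * Real.sqrt v)
          + v^(-(n:ℝ)/2) * ((Polynomial.aeval (a * Real.sqrt v)
              (Polynomial.derivative (hermiteH n))) * (a*(1/(2*Real.sqrt v)))) : ℝ) : ℂ)
            * Complex.exp (Complex.I * (a:ℂ)^2 * ((u:ℂ) + (v:ℂ)*Complex.I) / 2)
        + ((v ^ (-(n:ℝ)/2) * Hr n (a * Real.sqrt v) : ℝ) : ℂ) *
          (Complex.I * (a:ℂ)^2 * Complex.I / 2 *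
            Complex.exp (Complex.I * (a:ℂ)^2 * ((u:ℂ) + (v:ℂ)*Complex.I) / 2)) := by
    have h1 : HasDerivAt (fun v' : ℝ => ((u:ℂ) + (v':ℂ)*Complex.I)) Complex.I v := by
      simpa using (((hasDerivAt_id v).ofReal_comp).mul_const Complex.I).const_add (u:ℂ)
    have h2 := ((h1.const_mul (Complex.I * (a:ℂ)^2)).div_const 2).cexp
    have h6 := (hg.ofReal_comp).mul h2
    have h3 : (fun v' : ℝ => fRaise (2+n) a u v')
        = fun v' : ℝ => ((v' ^ (-(n:ℝ)/2) * Hr n (a * Real.sqrt v') : ℝ) : ℂ) *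
          Complex.exp (Complex.I * (a:ℂ)^2 * ((u:ℂ) + (v':ℂ)*Complex.I) / 2) := by
      funext v'; exact hfr u v'
    erw [h3, h6.deriv]
    push_cast
    ring
  rw [hu, hvv, hfr u v]
  have keyC := congrArg (Complex.ofReal) (key_real n a v hv)
  push_cast at keyC
  set E := Complex.exp (Complex.I * (a:ℂ)^2 * ((u:ℂ) + (v:ℂ)*Complex.I) / 2) with hE
  clear_value E
  push_cast
  ring_nf
  ring_nf at keyC
  simp only [Complex.I_sq, Complex.I_pow_four]
  linear_combination E * keyC
end
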